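/- arXiv:2505.12128 — 2 statements merged into one kernel-verified Lean document; each statement's English description precedes it below -/
import Mathlib

section
/- Fix 0 ≤ β < 1 and define c_k^β = sum over j from 0 to k of β^{k-j} r_j r_{k-j} where r_j = binom(2j,j)/4^j. Then for all k ≥ 1, c_k^β ≤ c_{k-1}^β * (1 - (1-β)^2/(2k)). -/
noncomputable def r (j : ℕ) : ℝ := (Nat.choose (2*j) j : ℝ) / 4^j

noncomputable def c (β : ℝ) (k : ℕ) : ℝ :=
  ∑ j ∈ Finset.range (k + 1), β^(k - j) * r j * r (k - j)

lemma r_pos (j : ℕ) : 0 < r j := by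
  unfold r
  apply div_pos
  · exact_mod_cast Nat.choose_pos (by omega)
  · positivity

lemma r_rec (i : ℕ) : (2*(i:ℝ)+2) * r (i+1) = (2*(i:ℝ)+1) * r i := by
  have h := Nat.succ_mul_centralBinom_succ i
  unfold Nat.centralBinom at h
  have h' : ((i:ℝ)+1) * ((2*(i+1)).choose (i+1) : ℝ)
      = 2*(2*(i:ℝ)+1) * ((2*i).choose i : ℝ) := by exact_mod_cast h
  unfold r
  have h4 : (4:ℝ)^(i+1) = 4 * 4^i := by ring
  rw [h4]
  have h5 : (4:ℝ)^i ≠ 0 := by positivity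
  field_simp
  nlinarith [h', pow_pos (show (0:ℝ)<4 by norm_num) i]

noncomputable def D (β : ℝ) (n : ℕ) : ℝ :=
  ∑ j ∈ Finset.range (n+1), β^j * r j * r (n-j)

lemma c_eq_D (β : ℝ) (n : ℕ) : c β n = D β n := by
  unfold c D
  rw [← Finset.sum_range_reflect (fun j => β^j * r j * r (n-j)) (n+1)]
  apply Finset.sum_congr rfl
  intro j hj
  rw [Finset.mem_range] at hj
  have h1 : n + 1 - 1 - j = n - j := by omega
  have h2 : n - (n - j) = j := by omega
  simp only [h1, h2]
  ring

lemma key (β : ℝ) (n : ℕ) :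
    (2*(n:ℝ)+2) * D β (n+1) =
    ∑ i ∈ Finset.range (n+1),
      (β*(2*(i:ℝ)+1) + (2*((n-i : ℕ):ℝ)+1)) * (β^i * r i * r (n-i)) := by
  unfold D
  rw [Finset.mul_sum]
  have split : ∀ j ∈ Finset.range (n+2),
      (2*(n:ℝ)+2) * (β^j * r j * r (n+1-j))
      = (2*(j:ℝ)) * (β^j * r j * r (n+1-j))
        + (2*((n+1-j : ℕ):ℝ)) * (β^j * r j * r (n+1-j)) := by
    intro j hj
    rw [Finset.mem_range] at hj
    have hc : ((n+1-j : ℕ):ℝ) = (n:ℝ) + 1 - (j:ℝ) := by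
      rw [Nat.cast_sub (by omega)]; push_cast; ring
    rw [hc]; ring
  rw [Finset.sum_congr rfl split, Finset.sum_add_distrib]
  have hS1 : ∑ j ∈ Finset.range (n+2), (2*(j:ℝ)) * (β^j * r j * r (n+1-j))
      = ∑ i ∈ Finset.range (n+1), (β*(2*(i:ℝ)+1)) * (β^i * r i * r (n-i)) := by
    rw [Finset.sum_range_succ']
    simp only [Nat.cast_zero, mul_zero, zero_mul, add_zero]
    apply Finset.sum_congr rfl
    intro i hi
    have hsub : n + 1 - (i+1) = n - i := by omega
    rw [hsub]
    push_cast
    linear_combination (β^(i+1) * r (n-i)) * r_rec i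
  have hS2 : ∑ j ∈ Finset.range (n+2), (2*((n+1-j:ℕ):ℝ)) * (β^j * r j * r (n+1-j))
      = ∑ j ∈ Finset.range (n+1), (2*((n-j:ℕ):ℝ)+1) * (β^j * r j * r (n-j)) := by
    rw [Finset.sum_range_succ]
    have h0 : n+1-(n+1) = 0 := by omega
    rw [h0]
    simp only [Nat.cast_zero, mul_zero, zero_mul, add_zero]
    apply Finset.sum_congr rfl
    intro j hj
    rw [Finset.mem_range] at hj
    have h1 : n+1-j = (n-j)+1 := by omega
    rw [h1]
    push_cast
    linear_combination (β^j * r j) * r_rec (n-j)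
  rw [hS1, hS2, ← Finset.sum_add_distrib]
  apply Finset.sum_congr rfl
  intro i hi
  ring

theorem stmt_9 (β : ℝ) (hβ0 : 0 ≤ β) (hβ1 : β < 1) (k : ℕ) (hk : 1 ≤ k) :
    c β k ≤ c β (k - 1) * (1 - (1 - β)^2 / (2 * k)) := by
  obtain ⟨n, rfl⟩ : ∃ n, k = n + 1 := ⟨k-1, by omega⟩
  have hsub : n + 1 - 1 = n := rfl
  rw [hsub, c_eq_D, c_eq_D]
  have hbound : (2*(n:ℝ)+2) * D β (n+1) ≤ (2*(n:ℝ)+2 - (1-β)^2) * D β n := by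
    rw [key β n]
    unfold D
    rw [Finset.mul_sum]
    apply Finset.sum_le_sum
    intro i hi
    rw [Finset.mem_range] at hi
    have ht : 0 ≤ β^i * r i * r (n-i) :=
      mul_nonneg (mul_nonneg (pow_nonneg hβ0 i) (r_pos _).le) (r_pos _).le
    have hco : β*(2*(i:ℝ)+1) + (2*((n-i:ℕ):ℝ)+1) ≤ 2*(n:ℝ)+2 - (1-β)^2 := by
      have hcast : ((n-i:ℕ):ℝ) = (n:ℝ) - (i:ℝ) := by
        rw [Nat.cast_sub (by omega)]
      rw [hcast]
      nlinarith [mul_nonneg (sub_nonneg.mpr hβ1.le)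
        (by positivity : (0:ℝ) ≤ 2*(i:ℝ)+β)]
    exact mul_le_mul_of_nonneg_right hco ht
  have h2 : (0:ℝ) < 2*(n:ℝ)+2 := by positivity
  have hcast : ((n+1:ℕ):ℝ) = (n:ℝ)+1 := by push_cast; ring
  rw [hcast, ← mul_le_mul_iff_of_pos_right h2]
  have heq : D β n * (1 - (1-β)^2/(2*((n:ℝ)+1))) * (2*(n:ℝ)+2)
      = (2*(n:ℝ)+2 - (1-β)^2) * D β n := by
    field_simp
  rw [heq]
  linarith [hbound]
end

section
/- Fix 0 ≤ β < 1. For every k ≥ 0, sum over j from 0 to k of tilde_c_j^β * (1 - β^{k-j+1})/(1-β) equals c_k^β, where tilde_c_j^β = sum_{i=0}^{j} tilde_r_i β^i tilde_r_{j-i} and c_k^β = sum_{j=0}^{k} β^{k-j} r_j r_{k-j}. -/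
/-- Generalized binomial coefficient `binom(x, k) = x(x-1)⋯(x-k+1)/k!`. -/
noncomputable def gbinom (x : ℝ) (k : ℕ) : ℝ :=
  (∏ i ∈ Finset.range k, (x - i)) / (Nat.factorial k)

noncomputable def tr (j : ℕ) : ℝ := (-1)^j * gbinom (1/2) j

noncomputable def tc (β : ℝ) (j : ℕ) : ℝ :=
  ∑ i ∈ Finset.range (j + 1), tr i * β^i * tr (j - i)

open Finset PowerSeries

lemma gbinom_succ (x : ℝ) (n : ℕ) :
    gbinom x (n+1) = gbinom x n * (x - n) / (n+1) := by
  have h : (Nat.factorial n : ℝ) ≠ 0 := Nat.cast_ne_zero.mpr (Nat.factorial_ne_zero n)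
  have h1 : ((n:ℝ)+1) ≠ 0 := by positivity
  rw [gbinom, gbinom, Finset.prod_range_succ, Nat.factorial_succ]
  push_cast
  rw [div_mul_eq_mul_div, div_div, mul_comm ((n:ℝ)+1)]

lemma r_succ (n : ℕ) : r (n+1) = r n * (2*n+1) / (2*n+2) := by
  have h := Nat.succ_mul_centralBinom_succ n
  have h' := congrArg (Nat.cast (R := ℝ)) h
  push_cast [Nat.centralBinom] at h'
  have h1 : ((n:ℝ)+1) ≠ 0 := by positivity
  have h2 : (4:ℝ)^n ≠ 0 := by positivity
  rw [r, r]
  field_simp [pow_succ]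
  linear_combination (2:ℝ) * 4^n * h'

lemma tr_succ (n : ℕ) : tr (n+1) = tr n * (2*n-1) / (2*n+2) := by
  rw [tr, tr, pow_succ, gbinom_succ]
  field_simp
  ring

lemma tr_succ_eq (n : ℕ) : tr (n+1) = - r n / (2*(n+1)) := by
  induction n with
  | zero => norm_num [tr, gbinom, r]
  | succ n ih =>
      rw [tr_succ, ih, r_succ]
      have h1 : ((n:ℝ)+1) ≠ 0 := by positivity
      push_cast
      field_simp
      ring

lemma sum_tr (n : ℕ) : ∑ i ∈ Finset.range (n+1), tr i = r n := by
  induction n with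
  | zero => norm_num [tr, gbinom, r]
  | succ n ih =>
      rw [Finset.sum_range_succ, ih, tr_succ_eq, r_succ]
      have h1 : ((n:ℝ)+1) ≠ 0 := by positivity
      field_simp
      ring

lemma conv_eq (β : ℝ) (k : ℕ) :
    ∑ j ∈ Finset.range (k+1), tc β j * (∑ m ∈ Finset.range (k - j + 1), β^m) = c β k := by
  classical
  set A := PowerSeries.mk (fun i => tr i * β^i) with hA
  set B := PowerSeries.mk tr with hB
  set C := PowerSeries.mk (fun m : ℕ => β^m) with hC
  set D := PowerSeries.mk (fun _ : ℕ => (1:ℝ)) with hD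
  have hAB : ∀ j, coeff j (A*B) = tc β j := by
    intro j
    rw [coeff_mul, Finset.Nat.sum_antidiagonal_eq_sum_range_succ_mk]
    simp [tc, hA, hB]
  have hCD : ∀ n, coeff n (C*D) = ∑ m ∈ Finset.range (n+1), β^m := by
    intro n
    rw [coeff_mul, Finset.Nat.sum_antidiagonal_eq_sum_range_succ_mk]
    simp [hC, hD]
  have hAC : ∀ s, coeff s (A*C) = β^s * r s := by
    intro s
    rw [coeff_mul, Finset.Nat.sum_antidiagonal_eq_sum_range_succ_mk]
    have key : ∀ i ∈ Finset.range (s+1),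
        (coeff i A) * (coeff (s-i) C) = β^s * tr i := by
      intro i hi
      rw [Finset.mem_range, Nat.lt_succ_iff] at hi
      simp only [hA, hC, coeff_mk]
      rw [mul_assoc, ← pow_add, Nat.add_sub_cancel' hi]
      ring
    rw [Finset.sum_congr rfl key, ← Finset.mul_sum, sum_tr]
  have hBD : ∀ t, coeff t (B*D) = r t := by
    intro t
    rw [coeff_mul, Finset.Nat.sum_antidiagonal_eq_sum_range_succ_mk]
    simpa [hB, hD] using sum_tr t
  calc ∑ j ∈ Finset.range (k+1), tc β j * (∑ m ∈ Finset.range (k - j + 1), β^m)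
      = coeff k ((A*B)*(C*D)) := by
        rw [coeff_mul, Finset.Nat.sum_antidiagonal_eq_sum_range_succ_mk]
        refine Finset.sum_congr rfl fun j hj => ?_
        rw [hAB, hCD]
    _ = coeff k ((A*C)*(B*D)) := by ring_nf
    _ = c β k := by
        rw [coeff_mul, Finset.Nat.sum_antidiagonal_eq_sum_range_succ_mk, c,
          ← Finset.sum_range_reflect]
        refine Finset.sum_congr rfl fun j hj => ?_
        rw [Finset.mem_range, Nat.lt_succ_iff] at hj
        rw [hAC, hBD]
        have h1 : k - (k - j) = j := Nat.sub_sub_self hj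
        have h2 : k + 1 - 1 - j = k - j := by omega
        rw [h2, h1]
        ring

theorem stmt_14 (β : ℝ) (hβ0 : 0 ≤ β) (hβ1 : β < 1) (k : ℕ) :
    ∑ j ∈ Finset.range (k + 1), tc β j * (1 - β^(k - j + 1)) / (1 - β) = c β k := by
  have h1 : (1:ℝ) - β ≠ 0 := sub_ne_zero.mpr (ne_of_gt (by linarith))
  have hgeom : ∀ n : ℕ, (1 - β^(n+1))/(1-β) = ∑ m ∈ Finset.range (n+1), β^m := by
    intro n
    rw [geom_sum_eq hβ1.ne, div_eq_div_iff h1 (sub_ne_zero.mpr hβ1.ne)]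
    ring
  rw [← conv_eq β k]
  refine Finset.sum_congr rfl fun j hj => ?_
  rw [mul_div_assoc, hgeom]
end
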